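/- Let A, B be n×n complex matrices. Then A ≤WG B if and only if there exist a unitary matrix Û, invertible square blocks T and T₁, blocks Ŝ₁, Ŝ₂, S₁, a nilpotent 2×2 block matrix fromBlocks N₁₁ N₁₂ N₂₁ N₂₂, and a nilpotent block N₂ such that A = Û · [3×3 block matrix with rows (T, Ŝ₁, Ŝ₂), (0, N₁₁, N₁₂), (0, N₂₁, N₂₂)] · Ûᴴ and B = Û · [3×3 block matrix with rows (T, Ŝ₁ − T⁻¹·Ŝ₁·T₁, Ŝ₂ − T⁻¹·Ŝ₁·S₁), (0, T₁, S₁), (0, 0, N₂)] · Ûᴴ. -/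

import Mathlib

open Matrix

/-- Group inverse over an arbitrary (finite) index type. -/
def GI {k : Type*} [Fintype k] [DecidableEq k] (M X : Matrix k k ℂ) : Prop :=
  M * X * M = M ∧ X * M * X = X ∧ M * X = X * M

lemma gi_unique {k : Type*} [Fintype k] [DecidableEq k] {M X Y : Matrix k k ℂ}
    (hX : GI M X) (hY : GI M Y) : X = Y := by
  obtain ⟨hX1, hX2, hX3⟩ := hX
  obtain ⟨hY1, hY2, hY3⟩ := hY
  have h1 : M * X = (M * Y) * (M * X) := by
    conv_lhs => rw [← hY1]
    rw [Matrix.mul_assoc]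
  have h2 : M * X = (M * X) * (M * Y) := by
    calc M * X = X * M := hX3
      _ = X * (M * Y * M) := by rw [hY1]
      _ = X * (M * (Y * M)) := by rw [Matrix.mul_assoc M Y M]
      _ = (X * M) * (Y * M) := by rw [← Matrix.mul_assoc]
      _ = (M * X) * (M * Y) := by rw [← hX3, ← hY3]
  have h3 : M * Y = (M * X) * (M * Y) := by
    conv_lhs => rw [← hX1]
    rw [Matrix.mul_assoc]
  have hPQ : M * X = M * Y := by rw [h2, ← h3]
  calc X = X * M * X := hX2.symm
    _ = X * (M * X) := by rw [Matrix.mul_assoc]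
    _ = X * (M * Y) := by rw [hPQ]
    _ = (X * M) * Y := by rw [← Matrix.mul_assoc]
    _ = (Y * M) * Y := by rw [← hX3, hPQ, hY3]
    _ = Y := hY2

lemma conj_mul_conj {k l : Type*} [Fintype k] [Fintype l] [DecidableEq l]
    (U : Matrix k l ℂ) (hU2 : Uᴴ * U = 1) (M N : Matrix l l ℂ) :
    (U * M * Uᴴ) * (U * N * Uᴴ) = U * (M * N) * Uᴴ := by
  calc (U * M * Uᴴ) * (U * N * Uᴴ) = U * M * (Uᴴ * U) * N * Uᴴ := by
        simp only [Matrix.mul_assoc]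
    _ = U * (M * N) * Uᴴ := by rw [hU2]; simp only [Matrix.mul_assoc, Matrix.one_mul]

lemma gi_conj {k l : Type*} [Fintype k] [Fintype l] [DecidableEq k] [DecidableEq l]
    (U : Matrix k l ℂ) (hU1 : U * Uᴴ = 1) (hU2 : Uᴴ * U = 1)
    {M X : Matrix l l ℂ} (h : GI M X) : GI (U * M * Uᴴ) (U * X * Uᴴ) := by
  obtain ⟨h1, h2, h3⟩ := h
  refine ⟨?_, ?_, ?_⟩
  · rw [conj_mul_conj U hU2, conj_mul_conj U hU2, h1]
  · rw [conj_mul_conj U hU2, conj_mul_conj U hU2, h2]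
  · rw [conj_mul_conj U hU2, conj_mul_conj U hU2, h3]

/-- Group inverse of a block upper triangular matrix with invertible top-left corner. -/
lemma tri_gi {k₁ k₂ : Type*} [Fintype k₁] [Fintype k₂] [DecidableEq k₁] [DecidableEq k₂]
    (a : Matrix k₁ k₁ ℂ) (c : Matrix k₁ k₂ ℂ) (b b' : Matrix k₂ k₂ ℂ)
    (ha : IsUnit a) (hb : GI b b') :
    GI (fromBlocks a c 0 b)
       (fromBlocks a⁻¹ (a⁻¹ * a⁻¹ * c * (1 - b * b') - a⁻¹ * c * b') 0 b') := by
  obtain ⟨hb1, hb2, hb3⟩ := hb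
  have hdet : IsUnit a.det := (Matrix.isUnit_iff_isUnit_det a).mp ha
  have haa : a * a⁻¹ = 1 := Matrix.mul_nonsing_inv a hdet
  have haa' : a⁻¹ * a = 1 := Matrix.nonsing_inv_mul a hdet
  set z : Matrix k₁ k₂ ℂ := a⁻¹ * a⁻¹ * c * (1 - b * b') - a⁻¹ * c * b' with hz
  set W : Matrix k₁ k₂ ℂ := a⁻¹ * c * (1 - b * b') with hW
  have haz : a * z + c * b' = W := by
    have e1 : a * (a⁻¹ * a⁻¹ * c * (1 - b * b')) = a⁻¹ * c * (1 - b * b') := by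
      calc a * (a⁻¹ * a⁻¹ * c * (1 - b * b'))
          = (a * a⁻¹) * (a⁻¹ * (c * (1 - b * b'))) := by simp only [Matrix.mul_assoc]
        _ = a⁻¹ * c * (1 - b * b') := by rw [haa, Matrix.one_mul, Matrix.mul_assoc]
    have e2 : a * (a⁻¹ * c * b') = c * b' := by
      calc a * (a⁻¹ * c * b') = (a * a⁻¹) * (c * b') := by simp only [Matrix.mul_assoc]
        _ = c * b' := by rw [haa, Matrix.one_mul]
    rw [hz, hW, Matrix.mul_sub, e1, e2]
    abel
  have hzb : a⁻¹ * c + z * b = W := by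
    have h5 : a⁻¹ * a⁻¹ * c * (1 - b * b') * b = 0 := by
      have : (1 - b * b') * b = 0 := by
        rw [Matrix.sub_mul, Matrix.one_mul, Matrix.mul_assoc, ← Matrix.mul_assoc b b' b, hb1,
          sub_self]
      rw [Matrix.mul_assoc (a⁻¹ * a⁻¹ * c), this, Matrix.mul_zero]
    have h6 : a⁻¹ * c * b' * b = a⁻¹ * c * (b * b') := by
      rw [Matrix.mul_assoc (a⁻¹ * c), ← hb3]
    rw [hz, Matrix.sub_mul, h5, h6, hW, Matrix.mul_sub, Matrix.mul_one]
    abel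
  have h0b : (1 - b * b') * b = 0 := by
    rw [Matrix.sub_mul, Matrix.one_mul, Matrix.mul_assoc, ← Matrix.mul_assoc b b' b, hb1,
      sub_self]
  have h0b' : (1 - b * b') * b' = 0 := by
    have hbb' : b * b' * b' = b' := by rw [hb3, hb2]
    rw [Matrix.sub_mul, Matrix.one_mul, Matrix.mul_assoc, ← Matrix.mul_assoc b b' b', hbb',
      sub_self]
  have hWb : W * b = 0 := by
    rw [hW, Matrix.mul_assoc, h0b, Matrix.mul_zero]
  have hWb' : W * b' = 0 := by
    rw [hW, Matrix.mul_assoc, h0b', Matrix.mul_zero]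
  have hbb'b' : b * b' * b' = b' := by rw [hb3, hb2]
  have hMY : fromBlocks a c 0 b * fromBlocks a⁻¹ z 0 b' = fromBlocks 1 W 0 (b * b') := by
    rw [Matrix.fromBlocks_multiply]
    simp only [Matrix.mul_zero, Matrix.zero_mul, add_zero, zero_add, haa, haz]
  have hYM : fromBlocks a⁻¹ z 0 b' * fromBlocks a c 0 b = fromBlocks 1 W 0 (b * b') := by
    rw [Matrix.fromBlocks_multiply]
    simp only [Matrix.mul_zero, Matrix.zero_mul, add_zero, zero_add, haa', hzb, hb3.symm]
  refine ⟨?_, ?_, ?_⟩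
  · rw [hMY, Matrix.fromBlocks_multiply]
    simp only [Matrix.one_mul, Matrix.mul_zero, Matrix.zero_mul, add_zero, zero_add, hWb, hb1]
  · rw [hYM, Matrix.fromBlocks_multiply]
    simp only [Matrix.one_mul, Matrix.mul_zero, Matrix.zero_mul, add_zero, zero_add, hWb', hbb'b']
  · rw [hMY, hYM]

lemma conjM_pow {k l : Type*} [Fintype k] [Fintype l] [DecidableEq k] [DecidableEq l]
    (U : Matrix k l ℂ) (hU1 : U * Uᴴ = 1) (hU2 : Uᴴ * U = 1)
    (M : Matrix l l ℂ) (j : ℕ) :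
    (U * M * Uᴴ) ^ (j + 1) = U * M ^ (j + 1) * Uᴴ := by
  induction j with
  | zero => simp
  | succ j ih =>
    rw [pow_succ, ih, conj_mul_conj U hU2, ← pow_succ]

lemma nilpotent_conj {k l : Type*} [Fintype k] [Fintype l] [DecidableEq k] [DecidableEq l]
    (U : Matrix k l ℂ) (hU1 : U * Uᴴ = 1) (hU2 : Uᴴ * U = 1)
    {M : Matrix l l ℂ} (h : IsNilpotent M) : IsNilpotent (U * M * Uᴴ) := by
  obtain ⟨j, hj⟩ := h
  exact ⟨j + 1, by rw [conjM_pow U hU1 hU2, pow_succ, hj, Matrix.zero_mul, Matrix.mul_zero,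
    Matrix.zero_mul]⟩

lemma nilpotent_unconj {k l : Type*} [Fintype k] [Fintype l] [DecidableEq k] [DecidableEq l]
    (U : Matrix k l ℂ) (hU1 : U * Uᴴ = 1) (hU2 : Uᴴ * U = 1)
    {M : Matrix l l ℂ} (h : IsNilpotent (U * M * Uᴴ)) : IsNilpotent M := by
  obtain ⟨j, hj⟩ := h
  refine ⟨j + 1, ?_⟩
  have hthis := conjM_pow U hU1 hU2 M j
  rw [pow_succ, hj, Matrix.zero_mul] at hthis
  calc M ^ (j+1) = (Uᴴ * U) * M ^ (j+1) * (Uᴴ * U) := by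
        rw [hU2, Matrix.one_mul, Matrix.mul_one]
    _ = Uᴴ * (U * M ^ (j+1) * Uᴴ) * U := by simp only [Matrix.mul_assoc]
    _ = Uᴴ * (0 : Matrix k k ℂ) * U := by rw [hthis]
    _ = 0 := by rw [Matrix.mul_zero, Matrix.zero_mul]

lemma fromBlocks_zN_pow {k₁ k₂ : Type*} [Fintype k₁] [Fintype k₂] [DecidableEq k₁]
    [DecidableEq k₂] (N : Matrix k₂ k₂ ℂ) (j : ℕ) :
    (fromBlocks (0 : Matrix k₁ k₁ ℂ) 0 0 N) ^ (j + 1) = fromBlocks 0 0 0 (N ^ (j + 1)) := by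
  induction j with
  | zero => simp
  | succ j ih =>
    rw [pow_succ, ih, Matrix.fromBlocks_multiply, ← pow_succ]
    simp

lemma nilpotent_fromBlocks_zN {k₁ k₂ : Type*} [Fintype k₁] [Fintype k₂] [DecidableEq k₁]
    [DecidableEq k₂] {N : Matrix k₂ k₂ ℂ} (h : IsNilpotent N) :
    IsNilpotent (fromBlocks (0 : Matrix k₁ k₁ ℂ) 0 0 N) := by
  obtain ⟨j, hj⟩ := h
  exact ⟨j + 1, by rw [fromBlocks_zN_pow, pow_succ, hj, Matrix.zero_mul]; simp⟩

lemma nilpotent_of_fromBlocks_zN {k₁ k₂ : Type*} [Fintype k₁] [Fintype k₂] [DecidableEq k₁]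
    [DecidableEq k₂] {N : Matrix k₂ k₂ ℂ}
    (h : IsNilpotent (fromBlocks (0 : Matrix k₁ k₁ ℂ) 0 0 N)) : IsNilpotent N := by
  obtain ⟨j, hj⟩ := h
  refine ⟨j + 1, ?_⟩
  have h2 : (fromBlocks (0 : Matrix k₁ k₁ ℂ) 0 0 N) ^ (j + 1) = 0 := by
    rw [pow_succ, hj, Matrix.zero_mul]
  rw [fromBlocks_zN_pow] at h2
  have := congrArg Matrix.toBlocks₂₂ h2
  simpa [Matrix.toBlocks_fromBlocks₂₂] using this.trans
    (show Matrix.toBlocks₂₂ (0 : Matrix (k₁ ⊕ k₂) (k₁ ⊕ k₂) ℂ) = 0 by ext i j; rfl)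

open Module in
lemma unitary_form {m : ℕ} (M₁ M₂ : Matrix (Fin m) (Fin m) ℂ)
    (hnil : IsNilpotent M₂) (h12 : M₁ᴴ * M₂ = 0) (h21 : M₂ * M₁ = 0)
    (hker : ∀ x : Fin m → ℂ, M₁ *ᵥ (M₁ *ᵥ x) = 0 → M₁ *ᵥ x = 0) :
    ∃ (p r : ℕ) (V : Matrix (Fin m) (Fin p ⊕ Fin r) ℂ)
      (T : Matrix (Fin p) (Fin p) ℂ) (S : Matrix (Fin p) (Fin r) ℂ)
      (N : Matrix (Fin r) (Fin r) ℂ),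
      V * Vᴴ = 1 ∧ Vᴴ * V = 1 ∧ IsUnit T ∧ IsNilpotent N ∧
      M₁ = V * (fromBlocks T S 0 0 : Matrix (Fin p ⊕ Fin r) (Fin p ⊕ Fin r) ℂ) * Vᴴ ∧
      M₂ = V * (fromBlocks 0 0 0 N : Matrix (Fin p ⊕ Fin r) (Fin p ⊕ Fin r) ℂ) * Vᴴ := by
  classical
  set E := EuclideanSpace ℂ (Fin m) with hE
  let f : E →ₗ[ℂ] E := Matrix.toEuclideanLin M₁
  set W : Submodule ℂ E := LinearMap.range f with hW
  set p := finrank ℂ W with hp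
  set r := finrank ℂ Wᗮ with hr
  let b₁ : OrthonormalBasis (Fin p) ℂ W := stdOrthonormalBasis ℂ W
  let b₂ : OrthonormalBasis (Fin r) ℂ Wᗮ := stdOrthonormalBasis ℂ Wᗮ
  set v : Fin p ⊕ Fin r → E := Sum.elim (fun i => (b₁ i : E)) (fun i => (b₂ i : E)) with hv
  have hvW : ∀ i : Fin p, v (Sum.inl i) ∈ W := fun i => (b₁ i).2
  have hvWo : ∀ i : Fin r, v (Sum.inr i) ∈ Wᗮ := fun i => (b₂ i).2
  have hortho : Orthonormal ℂ v := by
    rw [orthonormal_iff_ite]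
    rintro (i | i) (j | j)
    · simpa [hv, Submodule.coe_inner] using orthonormal_iff_ite.mp b₁.orthonormal i j
    · simp only [hv, Sum.elim_inl, Sum.elim_inr, reduceCtorEq, if_false]
      exact Submodule.inner_right_of_mem_orthogonal (hvW i) (hvWo j)
    · simp only [hv, Sum.elim_inl, Sum.elim_inr, reduceCtorEq, if_false]
      exact Submodule.inner_left_of_mem_orthogonal (hvW j) (hvWo i)
    · simpa [hv, Submodule.coe_inner] using orthonormal_iff_ite.mp b₂.orthonormal i j
  set V : Matrix (Fin m) (Fin p ⊕ Fin r) ℂ := Matrix.of (fun i j => v j i) with hVdef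
  have hVs : Vᴴ * V = 1 := by
    ext j k
    have h := orthonormal_iff_ite.mp hortho j k
    rw [PiLp.inner_apply] at h
    simp only [RCLike.inner_apply] at h
    simpa [Matrix.mul_apply, Matrix.conjTranspose_apply, hVdef, Matrix.one_apply, mul_comm] using h
  have hcard : p + r = m := by
    have := Submodule.finrank_add_finrank_orthogonal W
    rw [← hp, ← hr] at this
    rwa [show finrank ℂ E = m from finrank_euclideanSpace_fin] at this
  have hVV : V * Vᴴ = 1 := by
    exact (Matrix.mul_eq_one_comm_of_equiv
      (finSumFinEquiv.trans (finCongr hcard))).mp hVs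
  -- entries of conjugated matrices
  have hent : ∀ (M : Matrix (Fin m) (Fin m) ℂ) (j k : Fin p ⊕ Fin r),
      (Vᴴ * M * V) j k = star ((v j : Fin m → ℂ)) ⬝ᵥ (M *ᵥ (v k : Fin m → ℂ)) := by
    intro M j k
    rw [Matrix.mul_assoc, Matrix.mul_apply]
    simp only [Matrix.conjTranspose_apply, Matrix.mul_apply, hVdef, Matrix.of_apply,
      dotProduct, Matrix.mulVec, Pi.star_apply, Finset.mul_sum]
  -- dot products as inner products
  have hdot : ∀ (x y : Fin m → ℂ),
      star x ⬝ᵥ y = (inner ℂ ((WithLp.equiv 2 (Fin m → ℂ)).symm x)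
        ((WithLp.equiv 2 (Fin m → ℂ)).symm y) : ℂ) := fun x y => by
        simp [PiLp.inner_apply, dotProduct, mul_comm]
  -- membership facts
  have hWmem : ∀ x : Fin m → ℂ, (WithLp.equiv 2 (Fin m → ℂ)).symm (M₁ *ᵥ x) ∈ W :=
    fun x => ⟨(WithLp.equiv 2 (Fin m → ℂ)).symm x, rfl⟩
  have hWrep : ∀ w : E, w ∈ W → ∃ x : Fin m → ℂ,
      (w : Fin m → ℂ) = M₁ *ᵥ x := by
    intro w hw
    obtain ⟨x, hx⟩ := hw
    exact ⟨WithLp.equiv 2 (Fin m → ℂ) x, by rw [← hx]; rfl⟩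
  -- vanishing blocks of the compression of M₁
  have hC21 : ∀ (j : Fin r) (k : Fin p ⊕ Fin r), (Vᴴ * M₁ * V) (Sum.inr j) k = 0 := by
    intro j k
    rw [hent, hdot]
    exact Submodule.inner_left_of_mem_orthogonal (hWmem (v k)) (hvWo j)
  -- vanishing blocks of the compression of M₂
  have hG1 : ∀ (i : Fin p) (k : Fin p ⊕ Fin r), (Vᴴ * M₂ * V) (Sum.inl i) k = 0 := by
    intro i k
    rw [hent]
    obtain ⟨x, hx⟩ := hWrep _ (hvW i)
    rw [hx, Matrix.star_mulVec, ← Matrix.dotProduct_mulVec, Matrix.mulVec_mulVec, h12,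
      Matrix.zero_mulVec, dotProduct_zero]
  have hG2 : ∀ (j : Fin p ⊕ Fin r) (i : Fin p), (Vᴴ * M₂ * V) j (Sum.inl i) = 0 := by
    intro j i
    rw [hent]
    obtain ⟨x, hx⟩ := hWrep _ (hvW i)
    rw [hx, Matrix.mulVec_mulVec, h21, Matrix.zero_mulVec, dotProduct_zero]
  set C : Matrix (Fin p ⊕ Fin r) (Fin p ⊕ Fin r) ℂ := Vᴴ * M₁ * V with hC
  set G : Matrix (Fin p ⊕ Fin r) (Fin p ⊕ Fin r) ℂ := Vᴴ * M₂ * V with hG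
  set T := C.toBlocks₁₁ with hT
  set S := C.toBlocks₁₂ with hS
  set N := G.toBlocks₂₂ with hN
  have hCform : C = fromBlocks T S 0 0 := by
    ext (j | j) (k | k)
    · rfl
    · rfl
    · exact hC21 j (Sum.inl k)
    · exact hC21 j (Sum.inr k)
  have hGform : G = fromBlocks 0 0 0 N := by
    ext (j | j) (k | k)
    · exact hG1 j (Sum.inl k)
    · exact hG1 j (Sum.inr k)
    · exact hG2 (Sum.inr j) k
    · rfl
  have hM₁ : M₁ = V * (fromBlocks T S 0 0 : Matrix (Fin p ⊕ Fin r) (Fin p ⊕ Fin r) ℂ) * Vᴴ := by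
    rw [← hCform, hC]
    calc M₁ = (V * Vᴴ) * M₁ * (V * Vᴴ) := by rw [hVV, Matrix.one_mul, Matrix.mul_one]
      _ = V * (Vᴴ * M₁ * V) * Vᴴ := by simp only [Matrix.mul_assoc]
  have hM₂ : M₂ = V * (fromBlocks 0 0 0 N : Matrix (Fin p ⊕ Fin r) (Fin p ⊕ Fin r) ℂ) * Vᴴ := by
    rw [← hGform, hG]
    calc M₂ = (V * Vᴴ) * M₂ * (V * Vᴴ) := by rw [hVV, Matrix.one_mul, Matrix.mul_one]
      _ = V * (Vᴴ * M₂ * V) * Vᴴ := by simp only [Matrix.mul_assoc]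
  -- T is invertible
  have hTunit : IsUnit T := by
    rw [← Matrix.mulVec_injective_iff_isUnit]
    intro y₁ y₂ hy
    have hy0 : T *ᵥ (y₁ - y₂) = 0 := by
      rw [Matrix.mulVec_sub, hy, sub_self]
    set y := y₁ - y₂ with hydef
    have hy' : y = 0 := by
      set u : Fin p ⊕ Fin r → ℂ := Sum.elim y 0 with hu
      have hCu : C *ᵥ u = 0 := by
        rw [hCform, Matrix.fromBlocks_mulVec]
        have h1 : u ∘ Sum.inl = y := rfl
        have h2 : u ∘ Sum.inr = 0 := rfl
        rw [h1, h2, hy0, Matrix.mulVec_zero, Matrix.zero_mulVec, Matrix.mulVec_zero]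
        simp
      set z : Fin m → ℂ := V *ᵥ u with hz
      have hzW : (WithLp.equiv 2 (Fin m → ℂ)).symm z ∈ W := by
        have hzsum : (WithLp.equiv 2 (Fin m → ℂ)).symm z
            = ∑ i : Fin p, y i • (b₁ i : E) := by
          apply (WithLp.equiv 2 (Fin m → ℂ)).injective
          change z = WithLp.ofLp (∑ i : Fin p, y i • (b₁ i : E))
          funext l
          have hsa : (∑ i : Fin p, y i • (b₁ i : E)) l = ∑ i : Fin p, y i * (b₁ i : E) l :=
            by rw [WithLp.ofLp_sum, Finset.sum_apply]; rfl
          rw [hsa]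
          simp only [hz, Matrix.mulVec, dotProduct, hVdef, Matrix.of_apply]
          rw [Fintype.sum_sum_type]
          simp [hu, hv, mul_comm]
        rw [hzsum]
        exact Submodule.sum_mem _ (fun i _ => Submodule.smul_mem _ _ (Submodule.coe_mem _))
      have hMz : M₁ *ᵥ z = 0 := by
        have hMV : M₁ * V = V * C := by
          rw [hM₁, ← hCform]
          calc V * C * Vᴴ * V = V * C * (Vᴴ * V) := by simp only [Matrix.mul_assoc]
            _ = V * C := by rw [hVs, Matrix.mul_one]
        rw [hz, Matrix.mulVec_mulVec, hMV, ← Matrix.mulVec_mulVec, hCu, Matrix.mulVec_zero]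
      obtain ⟨x, hx⟩ := hWrep _ hzW
      have hzx : z = M₁ *ᵥ x := hx
      have : M₁ *ᵥ x = 0 := hker x (by rw [← hzx]; exact hMz)
      have hz0 : z = 0 := by rw [hzx, this]
      have hu0 : u = 0 := by
        calc u = 1 *ᵥ u := (Matrix.one_mulVec u).symm
          _ = (Vᴴ * V) *ᵥ u := by rw [hVs]
          _ = Vᴴ *ᵥ (V *ᵥ u) := (Matrix.mulVec_mulVec u Vᴴ V).symm
          _ = Vᴴ *ᵥ z := by rw [← hz]
          _ = 0 := by rw [hz0, Matrix.mulVec_zero]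
      funext i
      exact congrFun hu0 (Sum.inl i)
    rw [hydef] at hy'
    exact sub_eq_zero.mp hy'
  -- N is nilpotent
  have hNnil : IsNilpotent N := by
    apply nilpotent_of_fromBlocks_zN (k₁ := Fin p)
    rw [← hGform, hG]
    have := nilpotent_conj Vᴴ (by rwa [Matrix.conjTranspose_conjTranspose])
      (by rwa [Matrix.conjTranspose_conjTranspose]) hnil
    rwa [Matrix.conjTranspose_conjTranspose] at this
  exact ⟨p, r, V, T, S, N, hVV, hVs, hTunit, hNnil, hM₁, hM₂⟩

lemma conjT_conj {k l : Type*} [Fintype k] [Fintype l]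
    (U : Matrix k l ℂ) (M : Matrix l l ℂ) : (U * M * Uᴴ)ᴴ = U * Mᴴ * Uᴴ := by
  rw [Matrix.conjTranspose_mul, Matrix.conjTranspose_mul, Matrix.conjTranspose_conjTranspose,
    Matrix.mul_assoc]

lemma conj_inj {k l : Type*} [Fintype k] [Fintype l] [DecidableEq l]
    (U : Matrix k l ℂ) (hU2 : Uᴴ * U = 1) {M M' : Matrix l l ℂ}
    (h : U * M * Uᴴ = U * M' * Uᴴ) : M = M' := by
  have h2 := congrArg (fun Z => Uᴴ * Z * U) h
  calc M = (Uᴴ * U) * M * (Uᴴ * U) := by rw [hU2, Matrix.one_mul, Matrix.mul_one]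
    _ = Uᴴ * (U * M * Uᴴ) * U := by simp only [Matrix.mul_assoc]
    _ = Uᴴ * (U * M' * Uᴴ) * U := h2
    _ = (Uᴴ * U) * M' * (Uᴴ * U) := by simp only [Matrix.mul_assoc]
    _ = M' := by rw [hU2, Matrix.one_mul, Matrix.mul_one]

lemma fb_add {k₁ k₂ l₁ l₂ : Type*} (a a' : Matrix k₁ l₁ ℂ) (b b' : Matrix k₁ l₂ ℂ)
    (c c' : Matrix k₂ l₁ ℂ) (d d' : Matrix k₂ l₂ ℂ) :
    fromBlocks a b c d + fromBlocks a' b' c' d'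
      = fromBlocks (a + a') (b + b') (c + c') (d + d') := by
  ext (i | i) (j | j) <;> simp [Matrix.fromBlocks]

lemma fc_sub {k l₁ l₂ : Type*} (a a' : Matrix k l₁ ℂ) (b b' : Matrix k l₂ ℂ) :
    fromCols a b - fromCols a' b' = fromCols (a - a') (b - b') := by
  ext i (j | j) <;> simp [Matrix.fromCols]

/-- `X` is a group inverse of `M`. -/
def Matrix.IsGroupInverse {n : ℕ} (M X : Matrix (Fin n) (Fin n) ℂ) : Prop :=
  M * X * M = M ∧ X * M * X = X ∧ M * X = X * M

/-- `A = A₁ + A₂` is a core-EP decomposition of `A`: `A₁` is group invertible,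
`A₂` is nilpotent, `A₁ᴴ·A₂ = 0` and `A₂·A₁ = 0`. -/
def Matrix.IsCoreEPDecomposition {n : ℕ} (A A₁ A₂ : Matrix (Fin n) (Fin n) ℂ) : Prop :=
  A = A₁ + A₂ ∧ (∃ X, Matrix.IsGroupInverse A₁ X) ∧ IsNilpotent A₂ ∧
    A₁ᴴ * A₂ = 0 ∧ A₂ * A₁ = 0

/-- The WG order: the core parts of the core-EP decompositions of `A` and `B` are
comparable under the sharp order. -/
def Matrix.WGLE {n : ℕ} (A B : Matrix (Fin n) (Fin n) ℂ) : Prop :=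
  ∃ A₁ A₂ B₁ B₂ X : Matrix (Fin n) (Fin n) ℂ,
    Matrix.IsCoreEPDecomposition A A₁ A₂ ∧ Matrix.IsCoreEPDecomposition B B₁ B₂ ∧
    Matrix.IsGroupInverse A₁ X ∧ A₁ * X = B₁ * X ∧ X * A₁ = X * B₁

set_option maxHeartbeats 2000000 in
/-- Characterization of the WG order via simultaneous block decompositions. -/
theorem wgle_iff_block_form {n : ℕ} (A B : Matrix (Fin n) (Fin n) ℂ) :
    Matrix.WGLE A B ↔
    ∃ (p q r : ℕ) (U : Matrix (Fin n) (Fin p ⊕ (Fin q ⊕ Fin r)) ℂ)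
      (T : Matrix (Fin p) (Fin p) ℂ) (Sh₁ : Matrix (Fin p) (Fin q) ℂ)
      (Sh₂ : Matrix (Fin p) (Fin r) ℂ) (T₁ : Matrix (Fin q) (Fin q) ℂ)
      (S₁ : Matrix (Fin q) (Fin r) ℂ)
      (N₁₁ : Matrix (Fin q) (Fin q) ℂ) (N₁₂ : Matrix (Fin q) (Fin r) ℂ)
      (N₂₁ : Matrix (Fin r) (Fin q) ℂ) (N₂₂ : Matrix (Fin r) (Fin r) ℂ)
      (N₂ : Matrix (Fin r) (Fin r) ℂ),
      U * Uᴴ = 1 ∧ Uᴴ * U = 1 ∧ IsUnit T ∧ IsUnit T₁ ∧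
      IsNilpotent (Matrix.fromBlocks N₁₁ N₁₂ N₂₁ N₂₂) ∧ IsNilpotent N₂ ∧
      A = U * Matrix.fromBlocks T (Matrix.fromCols Sh₁ Sh₂) 0
            (Matrix.fromBlocks N₁₁ N₁₂ N₂₁ N₂₂) * Uᴴ ∧
      B = U * Matrix.fromBlocks T
            (Matrix.fromCols (Sh₁ - T⁻¹ * Sh₁ * T₁) (Sh₂ - T⁻¹ * Sh₁ * S₁)) 0
            (Matrix.fromBlocks T₁ S₁ 0 N₂) * Uᴴ := by
  constructor
  · rintro ⟨A₁, A₂, B₁, B₂, X, ⟨hAsum, hA₁gi, hA₂n, hA12, hA21⟩,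
      ⟨hBsum, hB₁gi, hB₂n, hB12, hB21⟩, hXgi, hsharp1, hsharp2⟩
    obtain ⟨hX1, hX2, hX3⟩ := hXgi
    -- A₁ has index at most one
    have hkerA : ∀ x : Fin n → ℂ, A₁ *ᵥ (A₁ *ᵥ x) = 0 → A₁ *ᵥ x = 0 := by
      intro x hx
      have hA₁eq : A₁ = X * (A₁ * A₁) := by
        calc A₁ = A₁ * X * A₁ := hX1.symm
          _ = X * A₁ * A₁ := by rw [hX3]
          _ = X * (A₁ * A₁) := by rw [Matrix.mul_assoc]
      have hmv : X *ᵥ (A₁ *ᵥ (A₁ *ᵥ x)) = (X * (A₁ * A₁)) *ᵥ x := by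
        rw [Matrix.mulVec_mulVec, Matrix.mulVec_mulVec, Matrix.mul_assoc]
      calc A₁ *ᵥ x = (X * (A₁ * A₁)) *ᵥ x := by rw [← hA₁eq]
        _ = X *ᵥ (A₁ *ᵥ (A₁ *ᵥ x)) := hmv.symm
        _ = 0 := by rw [hx, Matrix.mulVec_zero]
    obtain ⟨p, m', U', T, S, Nm, hU'1, hU'2, hTu, hNnil, hA₁f, hA₂f⟩ :=
      unitary_form A₁ A₂ hA₂n hA12 hA21 hkerA
    have hTT : T * T⁻¹ = 1 := Matrix.mul_nonsing_inv T ((Matrix.isUnit_iff_isUnit_det T).mp hTu)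
    have hT'T : T⁻¹ * T = 1 := Matrix.nonsing_inv_mul T ((Matrix.isUnit_iff_isUnit_det T).mp hTu)
    set FB : Matrix (Fin p ⊕ Fin m') (Fin p ⊕ Fin m') ℂ := fromBlocks T S 0 0 with hFBdef
    set Xin : Matrix (Fin p ⊕ Fin m') (Fin p ⊕ Fin m') ℂ :=
      fromBlocks T⁻¹ (T⁻¹ * T⁻¹ * S) 0 0 with hXindef
    have hXinGI : GI FB Xin := by
      have := tri_gi T S (0 : Matrix (Fin m') (Fin m') ℂ) 0 hTu ⟨by simp, by simp, rfl⟩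
      simpa using this
    have hXeq : X = U' * Xin * U'ᴴ := by
      refine gi_unique (M := A₁) ⟨hX1, hX2, hX3⟩ ?_
      have := gi_conj U' hU'1 hU'2 hXinGI
      rwa [← hA₁f] at this
    -- compressions of B₁ and B₂
    set C : Matrix (Fin p ⊕ Fin m') (Fin p ⊕ Fin m') ℂ := U'ᴴ * B₁ * U' with hC
    set G : Matrix (Fin p ⊕ Fin m') (Fin p ⊕ Fin m') ℂ := U'ᴴ * B₂ * U' with hG
    have hB₁eq : B₁ = U' * C * U'ᴴ := by
      rw [hC]
      calc B₁ = (U' * U'ᴴ) * B₁ * (U' * U'ᴴ) := by rw [hU'1, Matrix.one_mul, Matrix.mul_one]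
        _ = U' * (U'ᴴ * B₁ * U') * U'ᴴ := by simp only [Matrix.mul_assoc]
    have hB₂eq : B₂ = U' * G * U'ᴴ := by
      rw [hG]
      calc B₂ = (U' * U'ᴴ) * B₂ * (U' * U'ᴴ) := by rw [hU'1, Matrix.one_mul, Matrix.mul_one]
        _ = U' * (U'ᴴ * B₂ * U') * U'ᴴ := by simp only [Matrix.mul_assoc]
    -- transfer the sharp relations
    have hs1 : FB * Xin = C * Xin := by
      apply conj_inj U' hU'2
      rw [← conj_mul_conj U' hU'2, ← conj_mul_conj U' hU'2, ← hA₁f, ← hXeq, ← hB₁eq]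
      exact hsharp1
    have hs2 : Xin * FB = Xin * C := by
      apply conj_inj U' hU'2
      rw [← conj_mul_conj U' hU'2, ← conj_mul_conj U' hU'2, ← hA₁f, ← hXeq, ← hB₁eq]
      exact hsharp2
    -- blocks of C
    set D : Matrix (Fin m') (Fin m') ℂ := C.toBlocks₂₂ with hD
    set c11 := C.toBlocks₁₁ with hc11
    set c12 := C.toBlocks₁₂ with hc12
    set c21 := C.toBlocks₂₁ with hc21
    have hCfb : C = fromBlocks c11 c12 c21 D := (Matrix.fromBlocks_toBlocks C).symm
    have hs1' := hs1
    rw [hCfb, hXindef, hFBdef, Matrix.fromBlocks_multiply, Matrix.fromBlocks_multiply] at hs1'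
    obtain ⟨e11, e12, e21, e22⟩ := Matrix.fromBlocks_inj.mp hs1'
    have hc11T : c11 = T := by
      have h1 : T * T⁻¹ = c11 * T⁻¹ := by simpa using e11
      calc c11 = c11 * (T⁻¹ * T) := by rw [hT'T, Matrix.mul_one]
        _ = (c11 * T⁻¹) * T := by rw [Matrix.mul_assoc]
        _ = (T * T⁻¹) * T := by rw [← h1]
        _ = T := by rw [hTT, Matrix.one_mul]
    have hc21z : c21 = 0 := by
      have h1 : (0 : Matrix (Fin m') (Fin p) ℂ) = c21 * T⁻¹ := by simpa using e21
      calc c21 = (c21 * T⁻¹) * T := by rw [Matrix.mul_assoc, hT'T, Matrix.mul_one]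
        _ = 0 := by rw [← h1, Matrix.zero_mul]
    have hs2' := hs2
    rw [hCfb, hXindef, hFBdef, Matrix.fromBlocks_multiply, Matrix.fromBlocks_multiply,
      hc11T, hc21z] at hs2'
    obtain ⟨f11, f12, f21, f22⟩ := Matrix.fromBlocks_inj.mp hs2'
    have hc12S : c12 = S - T⁻¹ * (S * D) := by
      have h1 : T⁻¹ * S = T⁻¹ * c12 + T⁻¹ * T⁻¹ * S * D := by simpa using f12
      have h2 := congrArg (fun Z => T * Z) h1
      simp only [Matrix.mul_add] at h2
      rw [← Matrix.mul_assoc T T⁻¹ S, hTT, Matrix.one_mul, ← Matrix.mul_assoc T T⁻¹ c12,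
        hTT, Matrix.one_mul] at h2
      have h3 : T * (T⁻¹ * T⁻¹ * S * D) = T⁻¹ * (S * D) := by
        calc T * (T⁻¹ * T⁻¹ * S * D) = (T * T⁻¹) * (T⁻¹ * (S * D)) := by
              simp only [Matrix.mul_assoc]
          _ = T⁻¹ * (S * D) := by rw [hTT, Matrix.one_mul]
      rw [h3] at h2
      rw [eq_sub_iff_add_eq]
      exact h2.symm
    have hCform : C = fromBlocks T c12 0 D := by rw [hCfb, hc11T, hc21z]
    -- conditions on the compression of B₂
    have hGnil : IsNilpotent G := by
      apply nilpotent_unconj U' hU'1 hU'2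
      rw [← hB₂eq]
      exact hB₂n
    have hCHG : Cᴴ * G = 0 := by
      apply conj_inj U' hU'2 (M' := 0)
      rw [Matrix.mul_zero, Matrix.zero_mul, ← conj_mul_conj U' hU'2, ← conjT_conj, ← hB₁eq,
        ← hB₂eq]
      exact hB12
    have hGC : G * C = 0 := by
      apply conj_inj U' hU'2 (M' := 0)
      rw [Matrix.mul_zero, Matrix.zero_mul, ← conj_mul_conj U' hU'2, ← hB₁eq, ← hB₂eq]
      exact hB21
    set F : Matrix (Fin m') (Fin m') ℂ := G.toBlocks₂₂ with hF
    set g11 := G.toBlocks₁₁ with hg11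
    set g12 := G.toBlocks₁₂ with hg12
    set g21 := G.toBlocks₂₁ with hg21
    have hGfb : G = fromBlocks g11 g12 g21 F := (Matrix.fromBlocks_toBlocks G).symm
    have hTH : (T⁻¹)ᴴ * Tᴴ = 1 := by
      rw [← Matrix.conjTranspose_mul, hTT, Matrix.conjTranspose_one]
    have hCHG' := hCHG
    rw [hCform, hGfb, Matrix.fromBlocks_conjTranspose,
      show (0 : Matrix ((Fin p ⊕ Fin m')) (Fin p ⊕ Fin m') ℂ) = fromBlocks 0 0 0 0 by simp,
      Matrix.fromBlocks_multiply] at hCHG'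
    obtain ⟨k11, k12, k21, k22⟩ := Matrix.fromBlocks_inj.mp hCHG'
    have hg11z : g11 = 0 := by
      have h1 : Tᴴ * g11 = 0 := by simpa using k11
      calc g11 = ((T⁻¹)ᴴ * Tᴴ) * g11 := by rw [hTH, Matrix.one_mul]
        _ = (T⁻¹)ᴴ * (Tᴴ * g11) := by rw [Matrix.mul_assoc]
        _ = 0 := by rw [h1, Matrix.mul_zero]
    have hg12z : g12 = 0 := by
      have h1 : Tᴴ * g12 = 0 := by simpa using k12
      calc g12 = ((T⁻¹)ᴴ * Tᴴ) * g12 := by rw [hTH, Matrix.one_mul]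
        _ = (T⁻¹)ᴴ * (Tᴴ * g12) := by rw [Matrix.mul_assoc]
        _ = 0 := by rw [h1, Matrix.mul_zero]
    have hGC' := hGC
    rw [hCform, hGfb, hg11z, hg12z,
      show (0 : Matrix ((Fin p ⊕ Fin m')) (Fin p ⊕ Fin m') ℂ) = fromBlocks 0 0 0 0 by simp,
      Matrix.fromBlocks_multiply] at hGC'
    obtain ⟨l11, l12, l21, l22⟩ := Matrix.fromBlocks_inj.mp hGC'
    have hg21z : g21 = 0 := by
      have h1 : g21 * T = 0 := by simpa using l21
      calc g21 = (g21 * T) * T⁻¹ := by rw [Matrix.mul_assoc, hTT, Matrix.mul_one]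
        _ = 0 := by rw [h1, Matrix.zero_mul]
    have hFD : F * D = 0 := by
      rw [hg21z] at l22
      simpa using l22
    have hDHF : Dᴴ * F = 0 := by
      rw [hg12z] at k22
      simpa using k22
    have hGform : G = fromBlocks 0 0 0 F := by rw [hGfb, hg11z, hg12z, hg21z]
    have hFnil : IsNilpotent F := by
      apply nilpotent_of_fromBlocks_zN (k₁ := Fin p)
      rw [← hGform]
      exact hGnil
    -- D has index at most one
    obtain ⟨YB, hYB⟩ := hB₁gi
    have hCgi : GI C (U'ᴴ * YB * U') := by
      have := gi_conj U'ᴴ (by rw [Matrix.conjTranspose_conjTranspose]; exact hU'2)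
        (by rw [Matrix.conjTranspose_conjTranspose]; exact hU'1) (hYB : GI B₁ YB)
      rwa [Matrix.conjTranspose_conjTranspose] at this
    obtain ⟨hY1, hY2, hY3⟩ := hCgi
    have hkerC : ∀ x : Fin p ⊕ Fin m' → ℂ, C *ᵥ (C *ᵥ x) = 0 → C *ᵥ x = 0 := by
      intro x hx
      have hCeq : C = (U'ᴴ * YB * U') * (C * C) := by
        calc C = C * (U'ᴴ * YB * U') * C := hY1.symm
          _ = (U'ᴴ * YB * U') * C * C := by rw [hY3]
          _ = (U'ᴴ * YB * U') * (C * C) := by rw [Matrix.mul_assoc]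
      have hmv : (U'ᴴ * YB * U') *ᵥ (C *ᵥ (C *ᵥ x)) = ((U'ᴴ * YB * U') * (C * C)) *ᵥ x := by
        rw [Matrix.mulVec_mulVec, Matrix.mulVec_mulVec, Matrix.mul_assoc]
      calc C *ᵥ x = ((U'ᴴ * YB * U') * (C * C)) *ᵥ x := by rw [← hCeq]
        _ = (U'ᴴ * YB * U') *ᵥ (C *ᵥ (C *ᵥ x)) := hmv.symm
        _ = 0 := by rw [hx, Matrix.mulVec_zero]
    have hkerD : ∀ x : Fin m' → ℂ, D *ᵥ (D *ᵥ x) = 0 → D *ᵥ x = 0 := by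
      intro x hx
      set s : Fin p → ℂ := -(T⁻¹ *ᵥ (c12 *ᵥ (D *ᵥ x))) with hs
      set w : Fin p → ℂ := T⁻¹ *ᵥ (s - c12 *ᵥ x) with hw
      set u : Fin p ⊕ Fin m' → ℂ := Sum.elim w x with hu
      have hui : u ∘ Sum.inl = w := rfl
      have hur : u ∘ Sum.inr = x := rfl
      have htop : T *ᵥ w + c12 *ᵥ x = s := by
        rw [hw, Matrix.mulVec_mulVec, hTT, Matrix.one_mulVec]
        abel
      have hbot : (0 : Matrix (Fin m') (Fin p) ℂ) *ᵥ w + D *ᵥ x = D *ᵥ x := by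
        rw [Matrix.zero_mulVec, zero_add]
      have hCu : C *ᵥ u = Sum.elim s (D *ᵥ x) := by
        rw [hCform, Matrix.fromBlocks_mulVec, hui, hur, htop, hbot]
      have hCCu : C *ᵥ (C *ᵥ u) = 0 := by
        rw [hCu, hCform, Matrix.fromBlocks_mulVec]
        have h₁ : (Sum.elim s (D *ᵥ x)) ∘ Sum.inl = s := rfl
        have h₂ : (Sum.elim s (D *ᵥ x)) ∘ Sum.inr = D *ᵥ x := rfl
        have hTs : T *ᵥ s + c12 *ᵥ (D *ᵥ x) = 0 := by
          rw [hs, Matrix.mulVec_neg, Matrix.mulVec_mulVec, hTT, Matrix.one_mulVec]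
          abel
        have hbot2 : (0 : Matrix (Fin m') (Fin p) ℂ) *ᵥ s + D *ᵥ (D *ᵥ x) = 0 := by
          rw [Matrix.zero_mulVec, zero_add, hx]
        rw [h₁, h₂, hTs, hbot2]
        funext i
        cases i <;> rfl
      have hfin := hkerC u hCCu
      rw [hCu] at hfin
      funext i
      exact congrFun hfin (Sum.inr i)
    obtain ⟨q, rr, V, T₁, S₁, N₂, hV1, hV2, hT₁u, hN₂nil, hDf, hFf⟩ :=
      unitary_form D F hFnil hDHF hFD hkerD
    -- assemble the unitary matrix
    set Wb : Matrix (Fin p ⊕ Fin m') (Fin p ⊕ (Fin q ⊕ Fin rr)) ℂ := fromBlocks 1 0 0 V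
      with hWbdef
    have hWbH : Wbᴴ = fromBlocks 1 0 0 Vᴴ := by
      rw [hWbdef, Matrix.fromBlocks_conjTranspose]
      simp
    have hWb1 : Wb * Wbᴴ = 1 := by
      rw [hWbH, hWbdef, Matrix.fromBlocks_multiply]
      simp [hV1, Matrix.fromBlocks_one]
    have hWb2 : Wbᴴ * Wb = 1 := by
      rw [hWbH, hWbdef, Matrix.fromBlocks_multiply]
      simp [hV2, Matrix.fromBlocks_one]
    set Uf : Matrix (Fin n) (Fin p ⊕ (Fin q ⊕ Fin rr)) ℂ := U' * Wb with hUf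
    have hUf1 : Uf * Ufᴴ = 1 := by
      rw [hUf, Matrix.conjTranspose_mul]
      calc U' * Wb * (Wbᴴ * U'ᴴ) = U' * (Wb * Wbᴴ) * U'ᴴ := by simp only [Matrix.mul_assoc]
        _ = 1 := by rw [hWb1, Matrix.mul_one, hU'1]
    have hUf2 : Ufᴴ * Uf = 1 := by
      rw [hUf, Matrix.conjTranspose_mul]
      calc Wbᴴ * U'ᴴ * (U' * Wb) = Wbᴴ * (U'ᴴ * U') * Wb := by simp only [Matrix.mul_assoc]
        _ = 1 := by rw [hU'2, Matrix.mul_one, hWb2]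
    -- blocks of A and B
    set Sh₁ := (S * V).toCols₁ with hSh₁
    set Sh₂ := (S * V).toCols₂ with hSh₂
    have hcols : fromCols Sh₁ Sh₂ = S * V := Matrix.fromCols_toCols (S * V)
    set Nb : Matrix (Fin q ⊕ Fin rr) (Fin q ⊕ Fin rr) ℂ := Vᴴ * Nm * V with hNb
    have hNbfb : fromBlocks Nb.toBlocks₁₁ Nb.toBlocks₁₂ Nb.toBlocks₂₁ Nb.toBlocks₂₂ = Nb :=
      Matrix.fromBlocks_toBlocks Nb
    have hNbnil : IsNilpotent Nb := by
      have := nilpotent_conj Vᴴ (by rw [Matrix.conjTranspose_conjTranspose]; exact hV2)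
        (by rw [Matrix.conjTranspose_conjTranspose]; exact hV1) hNnil
      rwa [Matrix.conjTranspose_conjTranspose] at this
    have hNm : V * Nb * Vᴴ = Nm := by
      rw [hNb]
      calc V * (Vᴴ * Nm * V) * Vᴴ = (V * Vᴴ) * Nm * (V * Vᴴ) := by simp only [Matrix.mul_assoc]
        _ = Nm := by rw [hV1, Matrix.one_mul, Matrix.mul_one]
    have hSVV : S * V * Vᴴ = S := by rw [Matrix.mul_assoc, hV1, Matrix.mul_one]
    -- final form of A
    have hAfull : A = U' * fromBlocks T S 0 Nm * U'ᴴ := by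
      rw [hAsum, hA₁f, hA₂f, ← Matrix.add_mul, ← Matrix.mul_add, fb_add]
      simp
    have hAmid : Wb * fromBlocks T (S * V) 0 Nb * Wbᴴ = fromBlocks T S 0 Nm := by
      rw [hWbH, hWbdef, Matrix.fromBlocks_multiply, Matrix.fromBlocks_multiply]
      simp only [Matrix.one_mul, Matrix.mul_one, Matrix.mul_zero, Matrix.zero_mul, add_zero,
        zero_add]
      rw [hSVV, hNm]
    have hAfinal : A = Uf * fromBlocks T (fromCols Sh₁ Sh₂) 0
        (fromBlocks Nb.toBlocks₁₁ Nb.toBlocks₁₂ Nb.toBlocks₂₁ Nb.toBlocks₂₂) * Ufᴴ := by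
      rw [hcols, hNbfb, hUf, Matrix.conjTranspose_mul]
      calc A = U' * fromBlocks T S 0 Nm * U'ᴴ := hAfull
        _ = U' * (Wb * fromBlocks T (S * V) 0 Nb * Wbᴴ) * U'ᴴ := by rw [hAmid]
        _ = U' * Wb * fromBlocks T (S * V) 0 Nb * (Wbᴴ * U'ᴴ) := by
              simp only [Matrix.mul_assoc]
    -- final form of B
    have hBfull : B = U' * fromBlocks T c12 0 (D + F) * U'ᴴ := by
      rw [hBsum, hB₁eq, hB₂eq, ← Matrix.add_mul, ← Matrix.mul_add, hCform, hGform, fb_add]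
      simp
    have hDFsum : V * fromBlocks T₁ S₁ 0 N₂ * Vᴴ = D + F := by
      have hsplit : (fromBlocks T₁ S₁ 0 N₂ : Matrix (Fin q ⊕ Fin rr) (Fin q ⊕ Fin rr) ℂ)
          = fromBlocks T₁ S₁ 0 0 + fromBlocks 0 0 0 N₂ := by
        rw [fb_add]
        simp
      rw [hsplit, Matrix.mul_add, Matrix.add_mul, ← hDf, ← hFf]
    have hSD : S * D = Sh₁ * Matrix.fromCols T₁ S₁ * Vᴴ := by
      rw [hDf, ← Matrix.mul_assoc, ← Matrix.mul_assoc, ← hcols,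
        Matrix.fromCols_mul_fromBlocks]
      simp [Matrix.mul_fromCols]
    have hShh : Matrix.fromCols (Sh₁ - T⁻¹ * Sh₁ * T₁) (Sh₂ - T⁻¹ * Sh₁ * S₁) * Vᴴ = c12 := by
      rw [hc12S, ← fc_sub, hcols]
      have hfc : Matrix.fromCols (T⁻¹ * Sh₁ * T₁) (T⁻¹ * Sh₁ * S₁)
          = T⁻¹ * Sh₁ * Matrix.fromCols T₁ S₁ := by
        rw [Matrix.mul_fromCols]
      rw [hfc, Matrix.sub_mul, hSVV, hSD]
      simp only [Matrix.mul_assoc]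
    have hBmid : Wb * fromBlocks T
        (Matrix.fromCols (Sh₁ - T⁻¹ * Sh₁ * T₁) (Sh₂ - T⁻¹ * Sh₁ * S₁)) 0
        (fromBlocks T₁ S₁ 0 N₂) * Wbᴴ = fromBlocks T c12 0 (D + F) := by
      rw [hWbH, hWbdef, Matrix.fromBlocks_multiply, Matrix.fromBlocks_multiply]
      simp only [Matrix.one_mul, Matrix.mul_one, Matrix.mul_zero, Matrix.zero_mul, add_zero,
        zero_add]
      rw [hShh, hDFsum]
    have hBfinal : B = Uf * fromBlocks T
        (Matrix.fromCols (Sh₁ - T⁻¹ * Sh₁ * T₁) (Sh₂ - T⁻¹ * Sh₁ * S₁)) 0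
        (fromBlocks T₁ S₁ 0 N₂) * Ufᴴ := by
      rw [hUf, Matrix.conjTranspose_mul]
      calc B = U' * fromBlocks T c12 0 (D + F) * U'ᴴ := hBfull
        _ = U' * (Wb * fromBlocks T
            (Matrix.fromCols (Sh₁ - T⁻¹ * Sh₁ * T₁) (Sh₂ - T⁻¹ * Sh₁ * S₁)) 0
            (fromBlocks T₁ S₁ 0 N₂) * Wbᴴ) * U'ᴴ := by rw [hBmid]
        _ = U' * Wb * fromBlocks T
            (Matrix.fromCols (Sh₁ - T⁻¹ * Sh₁ * T₁) (Sh₂ - T⁻¹ * Sh₁ * S₁)) 0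
            (fromBlocks T₁ S₁ 0 N₂) * (Wbᴴ * U'ᴴ) := by simp only [Matrix.mul_assoc]
    have hNbb : IsNilpotent (fromBlocks Nb.toBlocks₁₁ Nb.toBlocks₁₂ Nb.toBlocks₂₁
        Nb.toBlocks₂₂) := by
      rw [hNbfb]
      exact hNbnil
    exact ⟨p, q, rr, Uf, T, Sh₁, Sh₂, T₁, S₁, Nb.toBlocks₁₁, Nb.toBlocks₁₂, Nb.toBlocks₂₁,
      Nb.toBlocks₂₂, N₂, hUf1, hUf2, hTu, hT₁u, hNbb, hN₂nil, hAfinal, hBfinal⟩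
  · rintro ⟨p, q, r, U, T, Sh₁, Sh₂, T₁, S₁, N₁₁, N₁₂, N₂₁, N₂₂, N₂, hU1, hU2, hTu, hT₁u,
      hNNnil, hN₂nil, hAeq, hBeq⟩
    have hTT : T * T⁻¹ = 1 := Matrix.mul_nonsing_inv T ((Matrix.isUnit_iff_isUnit_det T).mp hTu)
    have hT'T : T⁻¹ * T = 1 := Matrix.nonsing_inv_mul T ((Matrix.isUnit_iff_isUnit_det T).mp hTu)
    set S := fromCols Sh₁ Sh₂ with hSdef
    set NN := fromBlocks N₁₁ N₁₂ N₂₁ N₂₂ with hNNdef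
    set Sh' := fromCols (Sh₁ - T⁻¹ * Sh₁ * T₁) (Sh₂ - T⁻¹ * Sh₁ * S₁) with hSh'def
    set Xin : Matrix (Fin p ⊕ (Fin q ⊕ Fin r)) (Fin p ⊕ (Fin q ⊕ Fin r)) ℂ :=
      fromBlocks T⁻¹ (T⁻¹ * T⁻¹ * S) 0 0 with hXindef
    have hXin : GI (fromBlocks T S 0 0) Xin := by
      have := tri_gi T S (0 : Matrix (Fin q ⊕ Fin r) (Fin q ⊕ Fin r) ℂ) 0 hTu
        ⟨by simp, by simp, rfl⟩
      simpa using this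
    have hDD' : GI (fromBlocks T₁ S₁ 0 (0 : Matrix (Fin r) (Fin r) ℂ))
        (fromBlocks T₁⁻¹ (T₁⁻¹ * T₁⁻¹ * S₁) 0 0) := by
      have := tri_gi T₁ S₁ (0 : Matrix (Fin r) (Fin r) ℂ) 0 hT₁u ⟨by simp, by simp, rfl⟩
      simpa using this
    have hYin := tri_gi T Sh' (fromBlocks T₁ S₁ 0 (0 : Matrix (Fin r) (Fin r) ℂ))
      (fromBlocks T₁⁻¹ (T₁⁻¹ * T₁⁻¹ * S₁) 0 0) hTu hDD'
    -- key identity : Sh' = S - T⁻¹ * (S * DD)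
    have hSDD : S * fromBlocks T₁ S₁ 0 (0 : Matrix (Fin r) (Fin r) ℂ)
        = fromCols (Sh₁ * T₁) (Sh₁ * S₁) := by
      rw [hSdef, Matrix.fromCols_mul_fromBlocks]
      simp
    have hSh' : Sh' = S - T⁻¹ * (S * fromBlocks T₁ S₁ 0 (0 : Matrix (Fin r) (Fin r) ℂ)) := by
      rw [hSDD, hSh'def, hSdef, Matrix.mul_fromCols, fc_sub]
      simp [Matrix.mul_assoc]
    refine ⟨U * (fromBlocks T S 0 0 : Matrix (Fin p ⊕ (Fin q ⊕ Fin r)) (Fin p ⊕ (Fin q ⊕ Fin r)) ℂ) * Uᴴ, U * (fromBlocks 0 0 0 NN : Matrix (Fin p ⊕ (Fin q ⊕ Fin r)) (Fin p ⊕ (Fin q ⊕ Fin r)) ℂ) * Uᴴ,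
      U * (fromBlocks T Sh' 0 (fromBlocks T₁ S₁ 0 0) : Matrix (Fin p ⊕ (Fin q ⊕ Fin r)) (Fin p ⊕ (Fin q ⊕ Fin r)) ℂ) * Uᴴ,
      U * (fromBlocks 0 0 0 (fromBlocks 0 0 0 N₂) : Matrix (Fin p ⊕ (Fin q ⊕ Fin r)) (Fin p ⊕ (Fin q ⊕ Fin r)) ℂ) * Uᴴ,
      U * Xin * Uᴴ, ⟨?_, ?_, ?_, ?_, ?_⟩, ⟨?_, ?_, ?_, ?_, ?_⟩, ?_, ?_, ?_⟩
    · rw [hAeq, ← Matrix.add_mul, ← Matrix.mul_add, fb_add]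
      simp
    · exact ⟨U * Xin * Uᴴ, gi_conj U hU1 hU2 hXin⟩
    · exact nilpotent_conj U hU1 hU2 (nilpotent_fromBlocks_zN hNNnil)
    · rw [conjT_conj, conj_mul_conj U hU2]
      have hz : (fromBlocks T S 0 0)ᴴ * (fromBlocks 0 0 0 NN) = 0 := by
        rw [Matrix.fromBlocks_conjTranspose, Matrix.fromBlocks_multiply]
        simp
      rw [hz, Matrix.mul_zero, Matrix.zero_mul]
    · rw [conj_mul_conj U hU2]
      have hz : (fromBlocks 0 0 0 NN) * (fromBlocks T S 0 0) = 0 := by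
        rw [Matrix.fromBlocks_multiply]; simp
      rw [hz, Matrix.mul_zero, Matrix.zero_mul]
    · rw [hBeq, ← Matrix.add_mul, ← Matrix.mul_add, fb_add]
      simp [fb_add]
    · exact ⟨_, gi_conj U hU1 hU2 hYin⟩
    · exact nilpotent_conj U hU1 hU2 (nilpotent_fromBlocks_zN (nilpotent_fromBlocks_zN hN₂nil))
    · rw [conjT_conj, conj_mul_conj U hU2]
      have hz : (fromBlocks T Sh' 0 (fromBlocks T₁ S₁ 0 0))ᴴ
          * (fromBlocks 0 0 0 (fromBlocks 0 0 0 N₂)) = 0 := by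
        rw [Matrix.fromBlocks_conjTranspose, Matrix.fromBlocks_multiply,
          Matrix.fromBlocks_conjTranspose, Matrix.fromBlocks_multiply]
        simp
      rw [hz, Matrix.mul_zero, Matrix.zero_mul]
    · rw [conj_mul_conj U hU2]
      have hz : (fromBlocks 0 0 0 (fromBlocks 0 0 0 N₂))
          * (fromBlocks T Sh' 0 (fromBlocks T₁ S₁ 0 0)) = 0 := by
        rw [Matrix.fromBlocks_multiply, Matrix.fromBlocks_multiply]
        simp
      rw [hz, Matrix.mul_zero, Matrix.zero_mul]
    · exact gi_conj U hU1 hU2 hXin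
    · rw [conj_mul_conj U hU2, conj_mul_conj U hU2]
      have hz : (fromBlocks T S 0 0 : Matrix (Fin p ⊕ (Fin q ⊕ Fin r)) (Fin p ⊕ (Fin q ⊕ Fin r)) ℂ) * Xin
          = fromBlocks T Sh' 0 (fromBlocks T₁ S₁ 0 0) * Xin := by
        rw [hXindef, Matrix.fromBlocks_multiply, Matrix.fromBlocks_multiply]
        simp
      rw [hz]
    · rw [conj_mul_conj U hU2, conj_mul_conj U hU2]
      have hz : Xin * (fromBlocks T S 0 0 : Matrix (Fin p ⊕ (Fin q ⊕ Fin r)) (Fin p ⊕ (Fin q ⊕ Fin r)) ℂ)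
          = Xin * (fromBlocks T Sh' 0 (fromBlocks T₁ S₁ 0 0) : Matrix (Fin p ⊕ (Fin q ⊕ Fin r)) (Fin p ⊕ (Fin q ⊕ Fin r)) ℂ) := by
        rw [hXindef, Matrix.fromBlocks_multiply, Matrix.fromBlocks_multiply]
        have : T⁻¹ * S = T⁻¹ * Sh' + T⁻¹ * T⁻¹ * S * (fromBlocks T₁ S₁ 0 0 : Matrix (Fin q ⊕ Fin r) (Fin q ⊕ Fin r) ℂ) := by
          rw [hSh', Matrix.mul_sub]
          simp only [Matrix.mul_assoc]
          abel
        simp [this]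
      rw [hz]
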